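/- Let V be a nontrivial module over ℝ (or any field of characteristic zero), let p, q be real numbers, and let J be a linear endomorphism of V satisfying J² = p·J + q·id (a metallic structure). Then J³ − J − id = 0 if and only if either (p³ − p + 1 = 0 and q = 1 − p²), or (q ≠ 1 − p² and J = ((1 − p·q)/(p² + q − 1))·id). -/

import Mathlib

/-- Let `J` be a metallic structure (`J² = p·J + q·id`) on a nontrivial real module. Then
`J` is an almost plastic structure (`J³ − J − id = 0`) if and only if either
(`p³ − p + 1 = 0` and `q = 1 − p²`), or (`q ≠ 1 − p²` and
`J = ((1 − pq)/(p² + q − 1))·id`). -/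
theorem metallic_is_plastic_iff (V : Type*) [AddCommGroup V] [Module ℝ V] [Nontrivial V]
    (p q : ℝ) (J : Module.End ℝ V) (hJ : J ^ 2 = p • J + q • (1 : Module.End ℝ V)) :
    J ^ 3 - J - 1 = 0 ↔
      (p ^ 3 - p + 1 = 0 ∧ q = 1 - p ^ 2) ∨
        (q ≠ 1 - p ^ 2 ∧ J = ((1 - p * q) / (p ^ 2 + q - 1)) • (1 : Module.End ℝ V)) := by
  have hone : (1 : Module.End ℝ V) ≠ 0 := by
    intro h
    obtain ⟨x, hx⟩ := exists_ne (0 : V)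
    exact hx (by simpa using LinearMap.congr_fun h x)
  have h3 : J ^ 3 - J - 1 = (p ^ 2 + q - 1) • J + (p * q - 1) • (1 : Module.End ℝ V) := by
    have : J ^ 3 = J * J ^ 2 := by rw [pow_succ, pow_two, mul_assoc, ← pow_two]
    rw [this, hJ]
    rw [mul_add, mul_smul_comm, mul_smul_comm, mul_one, ← sq, hJ]
    rw [smul_add, smul_smul, smul_smul]
    module
  rw [h3]
  constructor
  · intro h
    by_cases hq : q = 1 - p ^ 2
    · left
      refine ⟨?_, hq⟩
      have hc : p ^ 2 + q - 1 = 0 := by rw [hq]; ring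
      rw [hc, zero_smul, zero_add, smul_eq_zero] at h
      rcases h with h | h
      · linear_combination p * hq - h
      · exact absurd h hone
    · right
      refine ⟨hq, ?_⟩
      have hc : p ^ 2 + q - 1 ≠ 0 := fun hc => hq (by linarith [hc])
      have : (p ^ 2 + q - 1) • J = (1 - p * q) • (1 : Module.End ℝ V) := by
        have := h
        rw [add_eq_zero_iff_eq_neg] at this
        rw [this, ← neg_smul]
        ring_nf
      calc J = ((p ^ 2 + q - 1)⁻¹ * (p ^ 2 + q - 1)) • J := by
              rw [inv_mul_cancel₀ hc, one_smul]
        _ = ((1 - p * q) / (p ^ 2 + q - 1)) • (1 : Module.End ℝ V) := by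
              rw [mul_smul, this, smul_smul]
              rw [div_eq_inv_mul]
  · rintro (⟨h1, h2⟩ | ⟨hq, hJ'⟩)
    · have hc : p ^ 2 + q - 1 = 0 := by rw [h2]; ring
      have hpq : p * q - 1 = 0 := by linear_combination p * h2 - h1
      rw [hc, hpq, zero_smul, zero_smul, add_zero]
    · have hc : p ^ 2 + q - 1 ≠ 0 := fun hc => hq (by linarith [hc])
      rw [hJ', smul_smul]
      rw [← add_smul]
      have : (p ^ 2 + q - 1) * ((1 - p * q) / (p ^ 2 + q - 1)) + (p * q - 1) = 0 := by
        field_simp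
        ring
      rw [this, zero_smul]
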